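/- Let N ⊆ M be a Frobenius extension with Frobenius homomorphism ψ, quasibasis Σᵢ uᵢ ⊗ vᵢ, A = End(_N M_N), and B = (M ⊗_N M)^N the ring with multiplication (b¹⊗b²)(b'¹⊗b'²) = b'¹b¹ ⊗ b²b'² and unit 1⊗1. Define F : A → B by F(α) = Σᵢ uᵢ ⊗ α(vᵢ) and F⁻¹ : B → A by F⁻¹(b)(m) = ψ(m b¹) b². Then F and F⁻¹ are mutually inverse bijections of additive groups, and F(α β) = F(β) ∗ F(α), where the convolution on B is a ∗ b = a¹ ψ(a² b¹) ⊗ b². -/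

import Mathlib

open scoped TensorProduct

namespace Frob

variable {N M : Type*} [Ring N] [Ring M]

/-- A Frobenius system for a ring extension `ι : N →+* M`:
an `N`-`N`-bimodule map `ψ : M → N` together with a quasibasis `∑ i, u i ⊗ v i`. -/
structure FrobeniusData (ι : N →+* M) where
  ψ : M →+ N
  ψ_left : ∀ (n : N) (m : M), ψ (ι n * m) = n * ψ m
  ψ_right : ∀ (m : M) (n : N), ψ (m * ι n) = ψ m * n
  k : ℕ
  u : Fin k → M
  v : Fin k → M
  quasi_left : ∀ m : M, ∑ i, ι (ψ (m * u i)) * v i = m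
  quasi_right : ∀ m : M, ∑ i, u i * ι (ψ (v i * m)) = m

/-- `N`-`N`-bimodule endomorphism of `M`. -/
def IsBimodEnd (ι : N →+* M) (α : M →+ M) : Prop :=
  (∀ n m, α (ι n * m) = ι n * α m) ∧ (∀ m n, α (m * ι n) = α m * ι n)

variable {ι : N →+* M}

/-- The antipode `S_A(α)(m') = ∑ i, u i * ι (ψ (α (v i) * m'))`. -/
noncomputable def SA (D : FrobeniusData ι) (α : M →+ M) : M →+ M :=
  AddMonoidHom.mk' (fun m' => ∑ i, D.u i * ι (D.ψ (α (D.v i) * m')))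
    (by intro x y; simp [mul_add, map_add, Finset.sum_add_distrib])

/-- The inverse antipode `S_A⁻¹(α)(m') = ∑ i, ι (ψ (m' * α (u i))) * v i`. -/
noncomputable def SAinv (D : FrobeniusData ι) (α : M →+ M) : M →+ M :=
  AddMonoidHom.mk' (fun m' => ∑ i, ι (D.ψ (m' * α (D.u i))) * D.v i)
    (by intro x y; simp [add_mul, map_add, Finset.sum_add_distrib])

/-- The subgroup of `M ⊗[ℤ] M` by which one quotients to obtain `M ⊗_N M`. -/
def relN (ι : N →+* M) : Submodule ℤ (M ⊗[ℤ] M) :=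
  Submodule.span ℤ
    {x | ∃ (n : N) (a b : M), x = (a * ι n) ⊗ₜ[ℤ] b - a ⊗ₜ[ℤ] (ι n * b)}

/-- The subgroup of `M ⊗[ℤ] M ⊗[ℤ] M` by which one quotients to obtain `M ⊗_N M ⊗_N M`. -/
def relN3 (ι : N →+* M) : Submodule ℤ (M ⊗[ℤ] (M ⊗[ℤ] M)) :=
  Submodule.span ℤ
    ({x | ∃ (n : N) (a b c : M),
        x = (a * ι n) ⊗ₜ[ℤ] (b ⊗ₜ[ℤ] c) - a ⊗ₜ[ℤ] ((ι n * b) ⊗ₜ[ℤ] c)} ∪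
     {x | ∃ (n : N) (a b c : M),
        x = a ⊗ₜ[ℤ] ((b * ι n) ⊗ₜ[ℤ] c) - a ⊗ₜ[ℤ] (b ⊗ₜ[ℤ] (ι n * c))})

/-- The Nakayama map `ν(c) = ∑ i, ψ(u i * c) * v i` on the centralizer. -/
noncomputable def nakayama (D : FrobeniusData ι) (c : M) : M :=
  ∑ i, ι (D.ψ (D.u i * c)) * D.v i

/-- The centralizer `C_M(N)`. -/
def centralizer (ι : N →+* M) : Set M := {c : M | ∀ n : N, c * ι n = ι n * c}

/-- The Fourier transform `F(α) = ∑ i, u i ⊗ α (v i)` (a representative in `M ⊗[ℤ] M`). -/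
noncomputable def Ftr (D : FrobeniusData ι) (α : M →+ M) : M ⊗[ℤ] M :=
  ∑ i, D.u i ⊗ₜ[ℤ] α (D.v i)

/-- The inverse Fourier transform evaluated on a representative:
`F⁻¹(b¹ ⊗ b²)(m) = ψ(m * b¹) * b²`. -/
noncomputable def FinvEval (D : FrobeniusData ι) (x : M ⊗[ℤ] M) (m : M) : M :=
  LinearMap.mul' ℤ M
    ((LinearMap.rTensor M
      ((ι.toAddMonoidHom.comp (D.ψ.comp (AddMonoidHom.mulLeft m))).toIntLinearMap)) x)

end Frob

namespace Frob
variable {N M : Type*} [Ring N] [Ring M] {ι : N →+* M}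

/-- `F⁻¹(x)` as an additive endomorphism of `M`. -/
noncomputable def FinvHom (D : FrobeniusData ι) (x : M ⊗[ℤ] M) : M →+ M :=
  AddMonoidHom.mk' (fun m => FinvEval D x m) (by
    intro a b
    induction x using TensorProduct.induction_on with
    | zero => simp [FinvEval]
    | tmul p q => simp [FinvEval, add_mul, map_add]
    | add u v hu hv =>
        simp only [FinvEval, map_add] at hu hv ⊢
        rw [hu, hv]; abel)
end Frob

namespace Frob
variable {N M : Type*} [Ring N] [Ring M] {ι : N →+* M}

lemma relN_gen (n : N) (a b : M) :
    (a * ι n) ⊗ₜ[ℤ] b - a ⊗ₜ[ℤ] (ι n * b) ∈ relN ι :=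
  Submodule.subset_span ⟨n, a, b, rfl⟩

lemma finvEval_tmul (D : FrobeniusData ι) (p q m : M) :
    FinvEval D (p ⊗ₜ[ℤ] q) m = ι (D.ψ (m * p)) * q := by
  simp [FinvEval]

lemma finvEval_add (D : FrobeniusData ι) (x y : M ⊗[ℤ] M) (m : M) :
    FinvEval D (x + y) m = FinvEval D x m + FinvEval D y m := by
  simp [FinvEval]

lemma finvEval_smul (D : FrobeniusData ι) (c : ℤ) (x : M ⊗[ℤ] M) (m : M) :
    FinvEval D (c • x) m = c • FinvEval D x m := by
  simp only [FinvEval, map_zsmul]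

lemma finvEval_sum (D : FrobeniusData ι) {κ : Type*} (s : Finset κ)
    (f : κ → M ⊗[ℤ] M) (m : M) :
    FinvEval D (∑ i ∈ s, f i) m = ∑ i ∈ s, FinvEval D (f i) m := by
  classical
  induction s using Finset.induction_on with
  | empty => simp [FinvEval]
  | insert _ _ h ih => rw [Finset.sum_insert h, Finset.sum_insert h, finvEval_add, ih]

lemma finvEval_relN (D : FrobeniusData ι) {x : M ⊗[ℤ] M} (hx : x ∈ relN ι) (m : M) :
    FinvEval D x m = 0 := by
  induction hx using Submodule.span_induction with
  | mem y hy =>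
      obtain ⟨n, a, b, rfl⟩ := hy
      rw [sub_eq_add_neg, finvEval_add]
      have : FinvEval D (-(a ⊗ₜ[ℤ] (ι n * b))) m
          = - FinvEval D (a ⊗ₜ[ℤ] (ι n * b)) m := by
        have := finvEval_smul D (-1) (a ⊗ₜ[ℤ] (ι n * b)) m
        simpa using this
      rw [this, finvEval_tmul, finvEval_tmul, ← mul_assoc m a, D.ψ_right, map_mul,
        mul_assoc]
      simp
  | zero => simp [FinvEval]
  | add y z _ _ hy hz => rw [finvEval_add, hy, hz, add_zero]
  | smul c y _ hy => rw [finvEval_smul, hy, smul_zero]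

lemma finvEval_mapLeft (D : FrobeniusData ι) (n : N) (x : M ⊗[ℤ] M) (m : M) :
    FinvEval D ((TensorProduct.map (LinearMap.mulLeft ℤ (ι n)) LinearMap.id) x) m
      = FinvEval D x (m * ι n) := by
  induction x using TensorProduct.induction_on with
  | zero => simp [FinvEval]
  | tmul p q => simp [finvEval_tmul, mul_assoc]
  | add y z hy hz => simp only [map_add, finvEval_add, hy, hz]

lemma finvEval_mapRight (D : FrobeniusData ι) (n : N) (x : M ⊗[ℤ] M) (m : M) :
    FinvEval D ((TensorProduct.map LinearMap.id (LinearMap.mulRight ℤ (ι n))) x) m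
      = FinvEval D x m * ι n := by
  induction x using TensorProduct.induction_on with
  | zero => simp [FinvEval]
  | tmul p q => simp [finvEval_tmul, mul_assoc]
  | add y z hy hz => simp only [map_add, finvEval_add, hy, hz, add_mul]

end Frob

/-- The Fourier transforms `F : A → B`, `F(α) = ∑ i, u i ⊗ α (v i)` and
`F⁻¹ : B → A`, `F⁻¹(b)(m) = ψ(m b¹) b²` are mutually inverse bijections of additive groups
between `A = End(_N M _N)` and `B = (M ⊗_N M)^N`, and `F(αβ) = F(β) ∗ F(α)` for the
convolution `a ∗ b = a¹ ψ(a² b¹) ⊗ b²`.  (Elements of `B` are encoded by representatives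
`x ∈ M ⊗[ℤ] M` which are `N`-central modulo the relation submodule `relN`, and equalities in
`M ⊗_N M` are encoded as membership of differences in `relN`.) -/
theorem statement3 {N M : Type*} [Ring N] [Ring M] (ι : N →+* M)
    (D : Frob.FrobeniusData ι) :
    -- `F` is additive
    (∀ α β : M →+ M, Frob.Ftr D (α + β) = Frob.Ftr D α + Frob.Ftr D β) ∧
    -- `F⁻¹` maps `B` into `A`:  `F⁻¹(b)` is a bimodule endomorphism for central `b`
    (∀ x : M ⊗[ℤ] M,
      (∀ n : N, (TensorProduct.map (LinearMap.mulLeft ℤ (ι n)) LinearMap.id) x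
            - (TensorProduct.map LinearMap.id (LinearMap.mulRight ℤ (ι n))) x ∈ Frob.relN ι) →
      Frob.IsBimodEnd ι (Frob.FinvHom D x)) ∧
    -- `F⁻¹ ∘ F = id` on bimodule endomorphisms
    (∀ α : M →+ M, Frob.IsBimodEnd ι α → ∀ m, Frob.FinvEval D (Frob.Ftr D α) m = α m) ∧
    -- `F ∘ F⁻¹ = id` on `N`-central representatives
    (∀ x : M ⊗[ℤ] M,
      (∀ n : N, (TensorProduct.map (LinearMap.mulLeft ℤ (ι n)) LinearMap.id) x
            - (TensorProduct.map LinearMap.id (LinearMap.mulRight ℤ (ι n))) x ∈ Frob.relN ι) →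
      (∑ i, D.u i ⊗ₜ[ℤ] Frob.FinvEval D x (D.v i)) - x ∈ Frob.relN ι) ∧
    -- `F(α ∘ β) = F(β) ∗ F(α)`
    (∀ α β : M →+ M, Frob.IsBimodEnd ι α → Frob.IsBimodEnd ι β →
      Frob.Ftr D (α.comp β)
        - (∑ i, ∑ j, (D.u i * ι (D.ψ (β (D.v i) * D.u j))) ⊗ₜ[ℤ] α (D.v j))
        ∈ Frob.relN ι) := by
  refine ⟨?_, ?_, ?_, ?_, ?_⟩
  · -- additivity of F
    intro α β
    simp [Frob.Ftr, TensorProduct.tmul_add, Finset.sum_add_distrib]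
  · -- F⁻¹ lands in bimodule endomorphisms
    intro x hx
    constructor
    · intro n m
      show Frob.FinvEval D x (ι n * m) = ι n * Frob.FinvEval D x m
      clear hx
      induction x using TensorProduct.induction_on with
      | zero => simp [Frob.FinvEval]
      | tmul p q =>
          rw [Frob.finvEval_tmul, Frob.finvEval_tmul, mul_assoc, D.ψ_left, map_mul,
            mul_assoc]
      | add y z hy hz =>
          rw [Frob.finvEval_add, Frob.finvEval_add, hy, hz, mul_add]
    · intro m n
      show Frob.FinvEval D x (m * ι n) = Frob.FinvEval D x m * ι n
      have h0 := Frob.finvEval_relN D (hx n) m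
      rw [sub_eq_add_neg, Frob.finvEval_add] at h0
      have hneg : Frob.FinvEval D
          (-(TensorProduct.map LinearMap.id (LinearMap.mulRight ℤ (ι n)) x)) m
          = - Frob.FinvEval D
              ((TensorProduct.map LinearMap.id (LinearMap.mulRight ℤ (ι n))) x) m := by
        have := Frob.finvEval_smul D (-1)
          ((TensorProduct.map LinearMap.id (LinearMap.mulRight ℤ (ι n))) x) m
        simpa using this
      rw [hneg, Frob.finvEval_mapLeft, Frob.finvEval_mapRight] at h0
      have := sub_eq_zero.mp (by simpa [sub_eq_add_neg] using h0)
      exact this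
  · -- F⁻¹ ∘ F = id
    intro α hα m
    rw [Frob.Ftr, Frob.finvEval_sum]
    calc (∑ i, Frob.FinvEval D (D.u i ⊗ₜ[ℤ] α (D.v i)) m)
        = ∑ i, α (ι (D.ψ (m * D.u i)) * D.v i) := by
          refine Finset.sum_congr rfl fun i _ => ?_
          rw [Frob.finvEval_tmul, hα.1]
      _ = α m := by rw [← map_sum, D.quasi_left]
  · -- F ∘ F⁻¹ = id
    intro x hx
    clear hx
    induction x using TensorProduct.induction_on with
    | zero => simp [Frob.FinvEval, (Frob.relN ι).zero_mem]
    | tmul p q =>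
        have key : (∑ i, D.u i ⊗ₜ[ℤ] Frob.FinvEval D (p ⊗ₜ[ℤ] q) (D.v i))
            - ∑ i, (D.u i * ι (D.ψ (D.v i * p))) ⊗ₜ[ℤ] q ∈ Frob.relN ι := by
          rw [← Finset.sum_sub_distrib]
          refine Submodule.sum_mem _ fun i _ => ?_
          rw [Frob.finvEval_tmul]
          have := (Frob.relN ι).neg_mem (Frob.relN_gen (D.ψ (D.v i * p)) (D.u i) q)
          simpa [neg_sub] using this
        have hsum : (∑ i, (D.u i * ι (D.ψ (D.v i * p))) ⊗ₜ[ℤ] q) = p ⊗ₜ[ℤ] q := by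
          rw [← TensorProduct.sum_tmul, D.quasi_right]
        rwa [hsum] at key
    | add y z hy hz =>
        have : (∑ i, D.u i ⊗ₜ[ℤ] Frob.FinvEval D (y + z) (D.v i)) - (y + z)
            = ((∑ i, D.u i ⊗ₜ[ℤ] Frob.FinvEval D y (D.v i)) - y)
              + ((∑ i, D.u i ⊗ₜ[ℤ] Frob.FinvEval D z (D.v i)) - z) := by
          simp only [Frob.finvEval_add, TensorProduct.tmul_add,
            Finset.sum_add_distrib]
          abel
        rw [this]
        exact (Frob.relN ι).add_mem hy hz
  · -- F(α ∘ β) = F(β) ∗ F(α)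
    intro α β hα _
    have hexp : Frob.Ftr D (α.comp β)
        = ∑ i, ∑ j, D.u i ⊗ₜ[ℤ] (ι (D.ψ (β (D.v i) * D.u j)) * α (D.v j)) := by
      unfold Frob.Ftr
      refine Finset.sum_congr rfl fun i _ => ?_
      have : α (β (D.v i)) = ∑ j, ι (D.ψ (β (D.v i) * D.u j)) * α (D.v j) := by
        conv_lhs => rw [← D.quasi_left (β (D.v i))]
        rw [map_sum]
        exact Finset.sum_congr rfl fun j _ => hα.1 _ _
      rw [AddMonoidHom.comp_apply, this, TensorProduct.tmul_sum]
    rw [hexp, ← Finset.sum_sub_distrib]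
    refine Submodule.sum_mem _ fun i _ => ?_
    rw [← Finset.sum_sub_distrib]
    refine Submodule.sum_mem _ fun j _ => ?_
    have := (Frob.relN ι).neg_mem
      (Frob.relN_gen (D.ψ (β (D.v i) * D.u j)) (D.u i) (α (D.v j)))
    simpa [neg_sub] using this
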